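/- Let x, y, z be positive real numbers, let φ ∈ (0, π), and let k, a₀, a₂ be real numbers. Assume that P_E(z) · R(2k/sin(φ)) · P_E(x) · R(a₀) · P_E(y) · R(a₂) = I (the 2×2 identity matrix) and that y² = x² + z² + 2·x·z·cos(2φ). Then, setting L = x + y + z, one has k = 2 sin³(φ) / L. -/

import Mathlib

/-- The billiard reflection matrix acting on Jacobi fields. -/
noncomputable def R (a : ℝ) : Matrix (Fin 2) (Fin 2) ℝ := !![-1, 0; a, -1]

/-- The Jacobi-field evolution matrix along a straight segment of length `τ`
in the Euclidean plane. -/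
noncomputable def P_E (τ : ℝ) : Matrix (Fin 2) (Fin 2) ℝ := !![1, τ; 0, 1]

theorem stmt_10 (x y z φ k a₀ a₂ : ℝ) (hx : 0 < x) (hy : 0 < y) (hz : 0 < z)
    (hφ : φ ∈ Set.Ioo 0 Real.pi)
    (hmat : P_E z * R (2 * k / Real.sin φ) * P_E x * R a₀ * P_E y * R a₂ = 1)
    (hcos : y ^ 2 = x ^ 2 + z ^ 2 + 2 * x * z * Real.cos (2 * φ))
    (L : ℝ) (hL : L = x + y + z) :
    k = 2 * Real.sin φ ^ 3 / L := by
  set s := Real.sin φ with hsdef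
  have hs : 0 < s := Real.sin_pos_of_pos_of_lt_pi hφ.1 hφ.2
  set b := 2 * k / s with hbdef
  have e01 := congrArg (fun M => M 0 1) hmat
  have e11 := congrArg (fun M => M 1 1) hmat
  simp only [R, P_E, Matrix.mul_apply, Fin.sum_univ_two, Matrix.cons_val', Matrix.cons_val_zero,
    Matrix.cons_val_one, Matrix.head_cons, Matrix.head_fin_const, Matrix.one_apply,
    Matrix.empty_val', Matrix.cons_val_fin_one] at e01 e11
  norm_num at e01 e11
  ring_nf at e01 e11
  field_simp at e01 e11
  have h1 : a₀*x*y*s = (x+y-z)*s := by linear_combination s*(e01 - z*e11)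
  have ha0 : a₀*x*y = x+y-z := mul_right_cancel₀ hs.ne' h1
  have hb : b*s = 2*k := by rw [hbdef]; field_simp
  have hk : 2*k*x*z = (x+z-y)*s := by linear_combination s*x*e11 - s*(1-b*x)*ha0 - x*z*hb
  have hc : Real.cos (2*φ) = 1 - 2*s^2 := by
    rw [Real.cos_two_mul, hsdef]
    linear_combination 2 * Real.sin_sq_add_cos_sq φ
  have hcos2 : (x+z-y)*(x+y+z) = 4*x*z*s^2 := by
    linear_combination -1*hcos + (-2*x*z)*hc
  subst hL
  have hL0 : (0:ℝ) < x + y + z := by linarith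
  rw [eq_div_iff hL0.ne']
  have key : k*(x+y+z)*(2*x*z) = 2*s^3*(2*x*z) := by
    linear_combination (x+y+z)*hk + s*hcos2
  exact mul_right_cancel₀ (by positivity : (2*x*z:ℝ) ≠ 0) key
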